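/- Geometric convergence of value iteration under the CVaR Bellman operator (convergence part of Theorem 1): suppose Qf : S × A × [0,1] → ℝ is a bounded function with T[Qf](s,a,y) = Qf(s,a,y) for all s ∈ S, a ∈ A, y ∈ (0,1]. Define the iterates Q_0 := Q0 (any bounded function with Q0(s,a,0) = Qf(s,a,0) for all s,a) and Q_{k+1}(s,a,y) := T[Q_k](s,a,y) for y ∈ (0,1] (with Q_{k+1}(s,a,0) := Qf(s,a,0)). Then for every k ∈ ℕ, sup_{(s,a,y) ∈ S × A × [0,1]} |Q_k(s,a,y) − Qf(s,a,y)| ≤ γ^k · sup_{(s,a,y)} |Q0(s,a,y) − Qf(s,a,y)|; in particular Q_k converges uniformly to Qf as k → ∞. -/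

import Mathlib

noncomputable section

/-- The CVaR risk envelope `U(y, p)`. -/
def riskEnv {Ω : Type*} [Fintype Ω] (y : ℝ) (p : Ω → ℝ) : Set (Ω → ℝ) :=
  {ξ | (∀ ω, 0 ≤ ξ ω ∧ ξ ω ≤ 1 / y) ∧ ∑ ω, ξ ω * p ω = 1}

/-- The CVaR Bellman operator `T`. -/
def bellman {S A : Type*} [Fintype S] [Fintype A] [Nonempty A]
    (P : S → A → S → ℝ) (c : S → A → ℝ) (γ : ℝ)
    (Q : S → A → ℝ → ℝ) (s : S) (a : A) (y : ℝ) : ℝ :=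
  c s a + γ * Finset.univ.inf' Finset.univ_nonempty (fun a' : A =>
    sSup ((fun ξ : S → ℝ => ∑ s', ξ s' * P s a s' * Q s' a' (y * ξ s')) ''
      riskEnv y (P s a)))

section aux
variable {S : Type*} [Fintype S]

lemma one_mem_riskEnv {y : ℝ} (hy0 : 0 < y) (hy1 : y ≤ 1)
    {p : S → ℝ} (hsum : ∑ s', p s' = 1) :
    (fun _ : S => (1:ℝ)) ∈ riskEnv y p := by
  refine ⟨fun ω => ⟨zero_le_one, ?_⟩, by simpa using hsum⟩
  rw [le_div_iff₀ hy0, one_mul]; exact hy1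

lemma mem_Icc_of_riskEnv {y : ℝ} (hy0 : 0 < y) {p ξ : S → ℝ}
    (hξ : ξ ∈ riskEnv y p) (s' : S) : y * ξ s' ∈ Set.Icc (0:ℝ) 1 := by
  constructor
  · exact mul_nonneg hy0.le (hξ.1 s').1
  · calc y * ξ s' ≤ y * (1 / y) := mul_le_mul_of_nonneg_left (hξ.1 s').2 hy0.le
      _ = 1 := by field_simp

lemma sum_bound {y : ℝ} {p : S → ℝ} (hp : ∀ s', 0 ≤ p s')
    {ξ : S → ℝ} (hξ : ξ ∈ riskEnv y p)
    {f : S → ℝ} {D : ℝ} (hf : ∀ s', |f s'| ≤ D) :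
    |∑ s', ξ s' * p s' * f s'| ≤ D := by
  calc |∑ s', ξ s' * p s' * f s'| ≤ ∑ s', |ξ s' * p s' * f s'| :=
        Finset.abs_sum_le_sum_abs _ _
    _ ≤ ∑ s', ξ s' * p s' * D := by
        apply Finset.sum_le_sum; intro i _
        rw [abs_mul, abs_of_nonneg (mul_nonneg (hξ.1 i).1 (hp i))]
        exact mul_le_mul_of_nonneg_left (hf i) (mul_nonneg (hξ.1 i).1 (hp i))
    _ = D := by rw [← Finset.sum_mul, hξ.2, one_mul]

end aux

section bell
variable {S A : Type*} [Fintype S] [Fintype A] [Nonempty A]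
variable (P : S → A → S → ℝ) (c : S → A → ℝ) (γ : ℝ) (Q : S → A → ℝ → ℝ)

/-- the inner image set for a given s a y a' -/
def innerSet (s : S) (a : A) (y : ℝ) (a' : A) : Set ℝ :=
  (fun ξ : S → ℝ => ∑ s', ξ s' * P s a s' * Q s' a' (y * ξ s')) '' riskEnv y (P s a)

lemma innerSet_nonempty (hP : ∀ s a, (∀ s', 0 ≤ P s a s') ∧ ∑ s', P s a s' = 1)
    (s : S) (a : A) {y : ℝ} (hy : y ∈ Set.Ioc (0:ℝ) 1) (a' : A) :
    (innerSet P Q s a y a').Nonempty :=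
  ⟨_, Set.mem_image_of_mem _ (one_mem_riskEnv hy.1 hy.2 (hP s a).2)⟩

lemma innerSet_abs_le (hP : ∀ s a, (∀ s', 0 ≤ P s a s') ∧ ∑ s', P s a s' = 1)
    {B : ℝ} (hQ : ∀ s a, ∀ t ∈ Set.Icc (0:ℝ) 1, |Q s a t| ≤ B)
    (s : S) (a : A) {y : ℝ} (hy : y ∈ Set.Ioc (0:ℝ) 1) (a' : A) :
    ∀ d ∈ innerSet P Q s a y a', |d| ≤ B := by
  rintro d ⟨ξ, hξ, rfl⟩
  exact sum_bound (hP s a).1 hξ (fun s' => hQ s' a' _ (mem_Icc_of_riskEnv hy.1 hξ s'))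

lemma innerSet_bddAbove (hP : ∀ s a, (∀ s', 0 ≤ P s a s') ∧ ∑ s', P s a s' = 1)
    {B : ℝ} (hQ : ∀ s a, ∀ t ∈ Set.Icc (0:ℝ) 1, |Q s a t| ≤ B)
    (s : S) (a : A) {y : ℝ} (hy : y ∈ Set.Ioc (0:ℝ) 1) (a' : A) :
    BddAbove (innerSet P Q s a y a') :=
  ⟨B, fun d hd => (abs_le.mp (innerSet_abs_le P Q hP hQ s a hy a' d hd)).2⟩

lemma sSup_innerSet_abs_le (hP : ∀ s a, (∀ s', 0 ≤ P s a s') ∧ ∑ s', P s a s' = 1)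
    {B : ℝ} (hQ : ∀ s a, ∀ t ∈ Set.Icc (0:ℝ) 1, |Q s a t| ≤ B)
    (s : S) (a : A) {y : ℝ} (hy : y ∈ Set.Ioc (0:ℝ) 1) (a' : A) :
    |sSup (innerSet P Q s a y a')| ≤ B := by
  obtain ⟨d, hd⟩ := innerSet_nonempty P Q hP s a hy a'
  rw [abs_le]
  constructor
  · exact le_trans (abs_le.mp (innerSet_abs_le P Q hP hQ s a hy a' d hd)).1
      (le_csSup (innerSet_bddAbove P Q hP hQ s a hy a') hd)
  · exact csSup_le ⟨d, hd⟩ (fun x hx => (abs_le.mp (innerSet_abs_le P Q hP hQ s a hy a' x hx)).2)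

lemma bellman_abs_le (hP : ∀ s a, (∀ s', 0 ≤ P s a s') ∧ ∑ s', P s a s' = 1)
    (hγ0 : 0 ≤ γ)
    {B : ℝ} (hQ : ∀ s a, ∀ t ∈ Set.Icc (0:ℝ) 1, |Q s a t| ≤ B)
    (s : S) (a : A) {y : ℝ} (hy : y ∈ Set.Ioc (0:ℝ) 1) :
    |bellman P c γ Q s a y| ≤ |c s a| + γ * B := by
  have h : |Finset.univ.inf' Finset.univ_nonempty
      (fun a' : A => sSup (innerSet P Q s a y a'))| ≤ B := by
    obtain ⟨a₀, -, ha₀⟩ := Finset.exists_mem_eq_inf' (Finset.univ_nonempty (α := A))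
      (fun a' : A => sSup (innerSet P Q s a y a'))
    rw [abs_le]
    constructor
    · rw [ha₀]; exact (abs_le.mp (sSup_innerSet_abs_le P Q hP hQ s a hy a₀)).1
    · exact le_trans (Finset.inf'_le _ (Finset.mem_univ (Classical.arbitrary A)))
        (abs_le.mp (sSup_innerSet_abs_le P Q hP hQ s a hy _)).2
  calc |bellman P c γ Q s a y| ≤ |c s a| + |γ * Finset.univ.inf' Finset.univ_nonempty
        (fun a' : A => sSup (innerSet P Q s a y a'))| := by
        rw [bellman]; exact abs_add_le _ _
    _ ≤ |c s a| + γ * B := by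
        rw [abs_mul, abs_of_nonneg hγ0]
        exact add_le_add_right (mul_le_mul_of_nonneg_left h hγ0) _

lemma bellman_contract (hP : ∀ s a, (∀ s', 0 ≤ P s a s') ∧ ∑ s', P s a s' = 1)
    (hγ0 : 0 ≤ γ) (Q' : S → A → ℝ → ℝ) {B B' D : ℝ}
    (hQ : ∀ s a, ∀ t ∈ Set.Icc (0:ℝ) 1, |Q s a t| ≤ B)
    (hQ' : ∀ s a, ∀ t ∈ Set.Icc (0:ℝ) 1, |Q' s a t| ≤ B')
    (hD : ∀ s a, ∀ t ∈ Set.Icc (0:ℝ) 1, |Q s a t - Q' s a t| ≤ D)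
    (s : S) (a : A) {y : ℝ} (hy : y ∈ Set.Ioc (0:ℝ) 1) :
    |bellman P c γ Q s a y - bellman P c γ Q' s a y| ≤ γ * D := by
  -- one sided sSup comparison
  have key : ∀ (R R' : S → A → ℝ → ℝ) (BR' : ℝ),
      (∀ s a, ∀ t ∈ Set.Icc (0:ℝ) 1, |R' s a t| ≤ BR') →
      (∀ s a, ∀ t ∈ Set.Icc (0:ℝ) 1, R s a t - R' s a t ≤ D) →
      ∀ a' : A, sSup (innerSet P R s a y a') ≤ sSup (innerSet P R' s a y a') + D := by
    intro R R' BR' hR' hle a'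
    apply csSup_le (innerSet_nonempty P R hP s a hy a')
    rintro d ⟨ξ, hξ, rfl⟩
    have h1 : ∑ s', ξ s' * P s a s' * R s' a' (y * ξ s')
        ≤ (∑ s', ξ s' * P s a s' * R' s' a' (y * ξ s')) + D := by
      have := Finset.sum_le_sum (f := fun s' => ξ s' * P s a s' * R s' a' (y * ξ s'))
        (g := fun s' => ξ s' * P s a s' * (R' s' a' (y * ξ s') + D)) (s := Finset.univ) ?_
      · calc ∑ s', ξ s' * P s a s' * R s' a' (y * ξ s')
            ≤ ∑ s', ξ s' * P s a s' * (R' s' a' (y * ξ s') + D) := this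
          _ = (∑ s', ξ s' * P s a s' * R' s' a' (y * ξ s')) + (∑ s', ξ s' * P s a s') * D := by
              simp_rw [mul_add, Finset.sum_add_distrib, ← Finset.sum_mul]
          _ = _ := by rw [hξ.2, one_mul]
      · intro i _
        exact mul_le_mul_of_nonneg_left
          (by linarith [hle i a' _ (mem_Icc_of_riskEnv hy.1 hξ i)])
          (mul_nonneg (hξ.1 i).1 ((hP s a).1 i))
    refine le_trans h1 (add_le_add_left ?_ D)
    exact le_csSup (innerSet_bddAbove P R' hP hR' s a hy a')
      (Set.mem_image_of_mem _ hξ)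
  have inf_le : ∀ (R R' : S → A → ℝ → ℝ) (BR' : ℝ),
      (∀ s a, ∀ t ∈ Set.Icc (0:ℝ) 1, |R' s a t| ≤ BR') →
      (∀ s a, ∀ t ∈ Set.Icc (0:ℝ) 1, R s a t - R' s a t ≤ D) →
      Finset.univ.inf' Finset.univ_nonempty (fun a' : A => sSup (innerSet P R s a y a'))
        ≤ Finset.univ.inf' Finset.univ_nonempty
            (fun a' : A => sSup (innerSet P R' s a y a')) + D := by
    intro R R' BR' hR' hle
    obtain ⟨a₀, -, ha₀⟩ := Finset.exists_mem_eq_inf' (Finset.univ_nonempty (α := A))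
      (fun a' : A => sSup (innerSet P R' s a y a'))
    rw [ha₀]
    exact le_trans (Finset.inf'_le _ (Finset.mem_univ a₀)) (key R R' BR' hR' hle a₀)
  have h1 := inf_le Q Q' B' hQ' (fun s a t ht => (abs_le.mp (hD s a t ht)).2.trans_eq (by ring_nf) |>.trans_eq rfl)
  have h2 := inf_le Q' Q B hQ (fun s a t ht => by
    have := (abs_le.mp (hD s a t ht)).1; linarith)
  rw [abs_le]
  have hbell : ∀ R : S → A → ℝ → ℝ, bellman P c γ R s a y = c s a +
      γ * Finset.univ.inf' Finset.univ_nonempty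
        (fun a' : A => sSup (innerSet P R s a y a')) := fun _ => rfl
  rw [hbell Q, hbell Q']
  constructor <;> nlinarith [mul_le_mul_of_nonneg_left h1 hγ0, mul_le_mul_of_nonneg_left h2 hγ0]

end bell

/-- Geometric convergence of value iteration under the CVaR Bellman operator
(convergence part of Theorem 1). -/
theorem bellman_value_iteration_converges {S A : Type*}
    [Fintype S] [Fintype A] [Nonempty S] [Nonempty A]
    (P : S → A → S → ℝ)
    (hP : ∀ s a, (∀ s', 0 ≤ P s a s') ∧ ∑ s', P s a s' = 1)
    (c : S → A → ℝ) {γ : ℝ} (hγ0 : 0 ≤ γ) (hγ1 : γ < 1)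
    (Qf Q0 : S → A → ℝ → ℝ)
    (hbf : ∃ B : ℝ, ∀ s a, ∀ y ∈ Set.Icc (0:ℝ) 1, |Qf s a y| ≤ B)
    (hb0 : ∃ B : ℝ, ∀ s a, ∀ y ∈ Set.Icc (0:ℝ) 1, |Q0 s a y| ≤ B)
    (hfix : ∀ s a, ∀ y ∈ Set.Ioc (0:ℝ) 1, bellman P c γ Qf s a y = Qf s a y)
    (h00 : ∀ s a, Q0 s a 0 = Qf s a 0)
    (Qs : ℕ → S → A → ℝ → ℝ)
    (hQs0 : Qs 0 = Q0)
    (hstep : ∀ k s a, ∀ y ∈ Set.Ioc (0:ℝ) 1,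
      Qs (k + 1) s a y = bellman P c γ (Qs k) s a y)
    (hstep0 : ∀ k s a, Qs (k + 1) s a 0 = Qf s a 0) :
    (∀ k : ℕ,
      sSup {d : ℝ | ∃ s a, ∃ y ∈ Set.Icc (0:ℝ) 1, d = |Qs k s a y - Qf s a y|}
        ≤ γ ^ k *
          sSup {d : ℝ | ∃ s a, ∃ y ∈ Set.Icc (0:ℝ) 1, d = |Q0 s a y - Qf s a y|}) ∧
    Filter.Tendsto
      (fun k => sSup {d : ℝ | ∃ s a, ∃ y ∈ Set.Icc (0:ℝ) 1, d = |Qs k s a y - Qf s a y|})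
      Filter.atTop (nhds 0) := by
  subst hQs0
  obtain ⟨Bf, hBf⟩ := hbf
  -- bound on c
  have hSA : (Finset.univ : Finset (S × A)).Nonempty := Finset.univ_nonempty
  set Bc : ℝ := Finset.univ.sup' hSA (fun p : S × A => |c p.1 p.2|) with hBc
  have hc : ∀ s a, |c s a| ≤ Bc := fun s a =>
    Finset.le_sup' (f := fun p : S × A => |c p.1 p.2|) (b := (s, a)) (Finset.mem_univ _)
  -- bounds on each iterate
  have hbQs : ∀ k, ∃ B : ℝ, ∀ s a, ∀ y ∈ Set.Icc (0:ℝ) 1, |Qs k s a y| ≤ B := by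
    intro k
    induction k with
    | zero => exact hb0
    | succ k ih =>
      obtain ⟨B, hB⟩ := ih
      refine ⟨max Bf (Bc + γ * B), fun s a y hy => ?_⟩
      rcases eq_or_lt_of_le hy.1 with h0 | h0
      · rw [← h0, hstep0 k s a]
        exact le_trans (hBf s a 0 ⟨le_refl _, zero_le_one⟩) (le_max_left _ _)
      · rw [hstep k s a y ⟨h0, hy.2⟩]
        refine le_trans (bellman_abs_le P c γ (Qs k) hP hγ0 hB s a ⟨h0, hy.2⟩) ?_
        exact le_trans (add_le_add_left (hc s a) _) (le_max_right _ _)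
  -- the error sets
  set E : ℕ → Set ℝ :=
    fun k => {d : ℝ | ∃ s a, ∃ y ∈ Set.Icc (0:ℝ) 1, d = |Qs k s a y - Qf s a y|} with hE
  have hEne : ∀ k, (E k).Nonempty := fun k =>
    ⟨_, Classical.arbitrary S, Classical.arbitrary A, 0, ⟨le_refl _, zero_le_one⟩, rfl⟩
  have hEbdd : ∀ k, BddAbove (E k) := by
    intro k
    obtain ⟨B, hB⟩ := hbQs k
    refine ⟨B + Bf, ?_⟩
    rintro d ⟨s, a, y, hy, rfl⟩
    exact le_trans (abs_sub _ _) (add_le_add (hB s a y hy) (hBf s a y hy))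
  have hD0 : ∀ k, 0 ≤ sSup (E k) := by
    intro k
    obtain ⟨d, hd⟩ := hEne k
    obtain ⟨s, a, y, hy, rfl⟩ := hd
    exact le_trans (abs_nonneg _) (le_csSup (hEbdd k) ⟨s, a, y, hy, rfl⟩)
  -- contraction step
  have hcontr : ∀ k, sSup (E (k + 1)) ≤ γ * sSup (E k) := by
    intro k
    apply csSup_le (hEne (k + 1))
    rintro d ⟨s, a, y, hy, rfl⟩
    rcases eq_or_lt_of_le hy.1 with h0 | h0
    · rw [← h0, hstep0 k s a, sub_self, abs_zero]
      exact mul_nonneg hγ0 (hD0 k)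
    · obtain ⟨B, hB⟩ := hbQs k
      have hyIoc : y ∈ Set.Ioc (0:ℝ) 1 := ⟨h0, hy.2⟩
      rw [hstep k s a y hyIoc, ← hfix s a y hyIoc]
      exact bellman_contract P c γ (Qs k) hP hγ0 Qf hB hBf
        (fun s' a' t ht => le_csSup (hEbdd k) ⟨s', a', t, ht, rfl⟩) s a hyIoc
  have hgeom : ∀ k, sSup (E k) ≤ γ ^ k * sSup (E 0) := by
    intro k
    induction k with
    | zero => simp
    | succ k ih =>
      calc sSup (E (k + 1)) ≤ γ * sSup (E k) := hcontr k
        _ ≤ γ * (γ ^ k * sSup (E 0)) := mul_le_mul_of_nonneg_left ih hγ0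
        _ = γ ^ (k + 1) * sSup (E 0) := by ring
  refine ⟨hgeom, ?_⟩
  have htend : Filter.Tendsto (fun k => γ ^ k * sSup (E 0)) Filter.atTop (nhds 0) := by
    have := (tendsto_pow_atTop_nhds_zero_of_lt_one hγ0 hγ1).mul_const (sSup (E 0))
    simpa using this
  exact squeeze_zero hD0 hgeom htend
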